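/- Fix an integer j ≥ 1 and let A be the 4×4 symmetric integer matrix with rows (2^j, 0, 0, 1), (0, 2^j, 0, 1), (0, 0, −2^j, 1), (1, 1, 1, 0). Then the quotient abelian group G = ℤ⁴ / A·ℤ⁴ (the cokernel of the map x ↦ Ax) is isomorphic to (ℤ/2^j) × (ℤ/2^j) via an isomorphism φ such that for every x ∈ ℤ⁴, if φ([x]) = (y, z) then (1/2)·xᵀA⁻¹x ≡ y·z/2^j (mod ℤ), where A⁻¹ is the inverse of A over ℚ. -/

import Mathlib

/-- The intersection matrix of the even labelled tree `𝔲_j` of Lemma 5.8. -/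
def uMat (j : ℕ) : Matrix (Fin 4) (Fin 4) ℤ :=
  !![2 ^ j, 0, 0, 1;
     0, 2 ^ j, 0, 1;
     0, 0, -2 ^ j, 1;
     1, 1, 1, 0]

set_option linter.unreachableTactic false
set_option linter.unusedTactic false
namespace L58

lemma mulVec_eq (j : ℕ) (x : Fin 4 → ℤ) :
    (uMat j).mulVec x = ![2^j * x 0 + x 3, 2^j * x 1 + x 3, -2^j * x 2 + x 3, x 0 + x 1 + x 2] := by
  funext i
  fin_cases i <;>
    simp [uMat, Matrix.mulVec, dotProduct, Fin.sum_univ_four] <;> ring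

def f (j : ℕ) : (Fin 4 → ℤ) →ₗ[ℤ] ZMod (2 ^ j) × ZMod (2 ^ j) where
  toFun x := (((x 0 - x 2 : ℤ) : ZMod (2 ^ j)), ((x 2 - x 1 : ℤ) : ZMod (2 ^ j)))
  map_add' x y := by
    simp only [Pi.add_apply, Prod.mk_add_mk, Prod.mk.injEq]
    constructor <;> push_cast <;> ring
  map_smul' c x := by
    simp only [Pi.smul_apply, smul_eq_mul, RingHom.id_apply, Prod.smul_mk, zsmul_eq_mul,
      Prod.mk.injEq]
    constructor <;> push_cast <;> ring

lemma range_le_ker (j : ℕ) :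
    LinearMap.range (uMat j).mulVecLin ≤ LinearMap.ker (f j) := by
  rintro _ ⟨x, rfl⟩
  have h0 : ∀ a : ℤ, (((2 ^ j : ℤ) * a : ℤ) : ZMod (2 ^ j)) = 0 := by
    intro a
    rw [ZMod.intCast_zmod_eq_zero_iff_dvd]
    exact ⟨a, by push_cast; ring⟩
  simp only [LinearMap.mem_ker, Matrix.mulVecLin_apply, mulVec_eq, f, LinearMap.coe_mk,
    AddHom.coe_mk, Prod.mk_eq_zero]
  constructor
  · rw [← h0 (x 0 + x 2)]; norm_num [Matrix.cons_val_two, Matrix.tail_cons, Matrix.head_cons]; ring_nf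
  · rw [← h0 (-(x 1 + x 2))]; norm_num [Matrix.cons_val_two, Matrix.tail_cons, Matrix.head_cons]; ring_nf

end L58

namespace L58

lemma ker_le_range (j : ℕ) :
    LinearMap.ker (f j) ≤ LinearMap.range (uMat j).mulVecLin := by
  intro x hx
  simp only [LinearMap.mem_ker, f, LinearMap.coe_mk, AddHom.coe_mk, Prod.mk_eq_zero,
    ZMod.intCast_zmod_eq_zero_iff_dvd] at hx
  obtain ⟨⟨a, ha⟩, ⟨b', hb'⟩⟩ := hx
  push_cast at ha hb'
  set b : ℤ := -b' with hb
  have hb2 : x 1 - x 2 = 2 ^ j * b := by rw [hb]; linarith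
  set γ : ℤ := a + b - x 3 with hγ
  refine ⟨![a - γ, b - γ, γ, x 2 + 2 ^ j * γ], ?_⟩
  rw [Matrix.mulVecLin_apply, mulVec_eq]
  funext i
  fin_cases i <;> simp <;> linarith

noncomputable def φ₀ (j : ℕ) :
    ((Fin 4 → ℤ) ⧸ LinearMap.range (uMat j).mulVecLin) →ₗ[ℤ]
      ZMod (2 ^ j) × ZMod (2 ^ j) :=
  Submodule.liftQ _ (f j) (range_le_ker j)

lemma φ₀_bij (j : ℕ) : Function.Bijective (φ₀ j) := by
  constructor
  · rw [← LinearMap.ker_eq_bot, φ₀, Submodule.ker_liftQ_eq_bot]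
    exact ker_le_range j
  · rintro ⟨y, z⟩
    haveI : NeZero (2 ^ j) := ⟨pow_ne_zero _ two_ne_zero⟩
    refine ⟨Submodule.Quotient.mk ![(y.val : ℤ), -(z.val : ℤ), 0, 0], ?_⟩
    simp only [φ₀, Submodule.liftQ_apply, f, LinearMap.coe_mk, AddHom.coe_mk]
    simp [ZMod.natCast_val, ZMod.cast_id]

noncomputable def φ (j : ℕ) :
    ((Fin 4 → ℤ) ⧸ LinearMap.range (uMat j).mulVecLin) ≃+
      ZMod (2 ^ j) × ZMod (2 ^ j) :=
  (LinearEquiv.ofBijective (φ₀ j) (φ₀_bij j)).toAddEquiv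

end L58

namespace L58

noncomputable def B (j : ℕ) : Matrix (Fin 4) (Fin 4) ℚ :=
  !![0, -(2 ^ j)⁻¹, (2 ^ j)⁻¹, 1;
     -(2 ^ j)⁻¹, 0, (2 ^ j)⁻¹, 1;
     (2 ^ j)⁻¹, (2 ^ j)⁻¹, -2 * (2 ^ j)⁻¹, -1;
     1, 1, -1, -(2 ^ j)]

lemma inv_uMat (j : ℕ) : ((uMat j).map (Int.cast : ℤ → ℚ))⁻¹ = B j := by
  apply Matrix.inv_eq_right_inv
  have hn : (2 : ℚ) ^ j ≠ 0 := pow_ne_zero _ two_ne_zero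
  ext i k
  fin_cases i <;> fin_cases k <;>
    simp [uMat, B, Matrix.mul_apply, Fin.sum_univ_four, Matrix.one_apply] <;>
    (try field_simp) <;> (try ring)

end L58

/-- Lemma 5.8: the cokernel `ℤ⁴/A·ℤ⁴` of `A = uMat j` is isomorphic to
`(ℤ/2^j) × (ℤ/2^j)` by an isomorphism carrying the boundary quadratic linking form
`x ↦ (1/2)·xᵀA⁻¹x mod ℤ` to the hyperbolic quadratic form `(y,z) ↦ y·z/2^j mod ℤ`. -/
theorem stmt_6 (j : ℕ) (hj : 1 ≤ j) :
    ∃ φ : ((Fin 4 → ℤ) ⧸ LinearMap.range (uMat j).mulVecLin) ≃+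
        (ZMod (2 ^ j) × ZMod (2 ^ j)),
      ∀ (x : Fin 4 → ℤ) (y z : ZMod (2 ^ j)),
        φ (Submodule.Quotient.mk x) = (y, z) →
        ∃ m : ℤ,
          (1 / 2 : ℚ) * dotProduct (fun i => (x i : ℚ))
              ((((uMat j).map (Int.cast : ℤ → ℚ))⁻¹).mulVec fun i => (x i : ℚ)) -
            (y.val : ℚ) * (z.val : ℚ) / 2 ^ j = (m : ℚ) := by
  obtain ⟨j', rfl⟩ : ∃ k, j = k + 1 := ⟨j - 1, by omega⟩
  haveI : NeZero (2 ^ (j' + 1)) := ⟨pow_ne_zero _ two_ne_zero⟩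
  refine ⟨L58.φ (j' + 1), ?_⟩
  intro x y z h
  have hf : L58.f (j' + 1) x = (y, z) := h
  simp only [L58.f, LinearMap.coe_mk, AddHom.coe_mk, Prod.mk.injEq] at hf
  obtain ⟨hy, hz⟩ := hf
  have h1 : ((x 0 - x 2 - (y.val : ℤ) : ℤ) : ZMod (2 ^ (j' + 1))) = 0 := by
    rw [← hy]
    push_cast [ZMod.natCast_val, ZMod.cast_id]
    ring
  rw [ZMod.intCast_zmod_eq_zero_iff_dvd] at h1
  obtain ⟨s, hs⟩ := h1
  have h2 : ((x 2 - x 1 - (z.val : ℤ) : ℤ) : ZMod (2 ^ (j' + 1))) = 0 := by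
    rw [← hz]
    push_cast [ZMod.natCast_val, ZMod.cast_id]
    ring
  rw [ZMod.intCast_zmod_eq_zero_iff_dvd] at h2
  obtain ⟨t, ht⟩ := h2
  push_cast at hs ht
  refine ⟨(y.val : ℤ) * t + (z.val : ℤ) * s + 2 ^ (j' + 1) * s * t
      + x 3 * (x 0 + x 1 - x 2) - 2 ^ j' * (x 3) ^ 2, ?_⟩
  have hx0 : (x 0 : ℚ) = (x 2 : ℚ) + (y.val : ℚ) + 2 ^ (j' + 1) * s := by
    have : (x 0 : ℤ) = x 2 + (y.val : ℤ) + 2 ^ (j' + 1) * s := by linarith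
    exact_mod_cast congrArg (Int.cast : ℤ → ℚ) this
  have hx1 : (x 1 : ℚ) = (x 2 : ℚ) - (z.val : ℚ) - 2 ^ (j' + 1) * t := by
    have : (x 1 : ℤ) = x 2 - (z.val : ℤ) - 2 ^ (j' + 1) * t := by linarith
    exact_mod_cast congrArg (Int.cast : ℤ → ℚ) this
  have hn : (2 : ℚ) ^ (j' + 1) ≠ 0 := pow_ne_zero _ two_ne_zero
  rw [L58.inv_uMat]
  simp only [dotProduct, Matrix.mulVec, L58.B, Fin.sum_univ_four,
    Matrix.cons_val', Matrix.cons_val_zero, Matrix.cons_val_one, Matrix.head_cons,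
    Matrix.cons_val_two, Matrix.tail_cons, Matrix.cons_val_three, Matrix.head_fin_const,
    Matrix.empty_val', Matrix.cons_val_fin_one, Matrix.of_apply]
  push_cast at hx0 hx1 ⊢
  rw [hx0, hx1]
  field_simp
  ring
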